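/- Let 0 < β < γ and 0 < c < β/(γ−β) (so that β + βc − γc > 0). Define w* := (β + βc − γc)/(γc) and, for w > −1, Υ(w) := c·w − 1 + ( γc(1+w)/(β+βc) )^{−β/(γ−β)} · (1+c)(γ−β)/γ. Then Υ is strictly convex on (−1,∞), Υ(w*) = 0, the derivative Υ′(w*) = 0, and consequently Υ(w) > 0 for every w > w*. -/

import Mathlib

open Set

/-- Let `0 < β < γ` and `0 < c < β/(γ−β)` (so `β + βc − γc > 0`).
Put `w* := (β + βc − γc)/(γc)` and, for `w > −1`,
`Υ(w) := c·w − 1 + (γc(1+w)/(β+βc))^{−β/(γ−β)}·(1+c)(γ−β)/γ`.  Then `Υ` is strictly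
convex on `(−1,∞)`, `Υ(w*) = 0`, `Υ′(w*) = 0`, and `Υ(w) > 0` for every `w > w*`. -/
theorem stmt_15 (β γ c : ℝ) (hβ : 0 < β) (hβγ : β < γ) (hc0 : 0 < c)
    (hc : c < β / (γ - β)) (Υ : ℝ → ℝ)
    (hΥ : ∀ w : ℝ, -1 < w → Υ w = c * w - 1 +
      (γ * c * (1 + w) / (β + β * c)) ^ (-(β / (γ - β))) * ((1 + c) * (γ - β) / γ)) :
    StrictConvexOn ℝ (Ioi (-1 : ℝ)) Υ ∧
    Υ ((β + β * c - γ * c) / (γ * c)) = 0 ∧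
    HasDerivAt Υ 0 ((β + β * c - γ * c) / (γ * c)) ∧
    ∀ w : ℝ, (β + β * c - γ * c) / (γ * c) < w → 0 < Υ w := by
  have hγβ : 0 < γ - β := sub_pos.2 hβγ
  have hγ : 0 < γ := hβ.trans hβγ
  have hc1 : (0:ℝ) < 1 + c := by linarith
  have hβc : (0:ℝ) < β + β * c := by nlinarith
  have hcc : c * (γ - β) < β := (lt_div_iff₀ hγβ).mp hc
  have hnum : 0 < β + β * c - γ * c := by nlinarith
  set p : ℝ := -(β / (γ - β)) with hpdef
  have hp : p < 0 := by
    rw [hpdef]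
    simpa using div_pos hβ hγβ
  set a : ℝ := γ * c / (β + β * c) with hadef
  have ha : 0 < a := div_pos (mul_pos hγ hc0) hβc
  set K : ℝ := (1 + c) * (γ - β) / γ with hKdef
  set w₀ : ℝ := (β + β * c - γ * c) / (γ * c) with hw0def
  have hw0pos : 0 < w₀ := div_pos hnum (mul_pos hγ hc0)
  have hw0 : (-1:ℝ) < w₀ := by linarith
  have haw₀ : a * (1 + w₀) = 1 := by
    rw [hadef, hw0def]
    field_simp
    ring
  have hpaK : p * a * K = -c := by
    rw [hpdef, hadef, hKdef]
    field_simp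
  set g : ℝ → ℝ := fun w => c * w - 1 + (a * (1 + w)) ^ p * K with hgdef
  have hΥg : EqOn Υ g (Ioi (-1 : ℝ)) := by
    intro w hw
    rw [hΥ w hw, hgdef]
    have hbase : γ * c * (1 + w) / (β + β * c) = a * (1 + w) := by
      rw [hadef]; ring
    simp only [hbase]
  have hpos : ∀ w : ℝ, -1 < w → 0 < a * (1 + w) := fun w hw =>
    mul_pos ha (by linarith)
  have hg' : ∀ w : ℝ, -1 < w → HasDerivAt g (c - c * (a * (1 + w)) ^ (p - 1)) w := by
    intro w hw
    have h1 : HasDerivAt (fun w : ℝ => a * (1 + w)) a w := by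
      simpa using ((hasDerivAt_id w).const_add (1 : ℝ)).const_mul a
    have h2 := h1.rpow_const (p := p) (Or.inl (hpos w hw).ne')
    have h3 := (((hasDerivAt_id w).const_mul c).sub_const 1).add (h2.mul_const K)
    have h4 : HasDerivAt g (c * 1 + a * p * (a * (1 + w)) ^ (p - 1) * K) w := h3
    convert h4 using 1
    linear_combination (-((a * (1 + w)) ^ (p - 1))) * hpaK
  have hΥ' : ∀ w : ℝ, -1 < w → HasDerivAt Υ (c - c * (a * (1 + w)) ^ (p - 1)) w := by
    intro w hw
    exact (hg' w hw).congr_of_eventuallyEq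
      (Filter.eventuallyEq_of_mem (Ioi_mem_nhds hw) hΥg)
  have hcont : ContinuousOn Υ (Ioi (-1 : ℝ)) := fun w hw =>
    ((hΥ' w hw).continuousAt).continuousWithinAt
  have hconv : StrictConvexOn ℝ (Ioi (-1 : ℝ)) Υ := by
    apply StrictMonoOn.strictConvexOn_of_deriv (convex_Ioi _) hcont
    rw [interior_Ioi]
    intro x hx y hy hxy
    rw [(hΥ' x hx).deriv, (hΥ' y hy).deriv]
    have h1 : a * (1 + x) < a * (1 + y) := by nlinarith [mem_Ioi.mp hx, mem_Ioi.mp hy]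
    have h2 := Real.rpow_lt_rpow_of_neg (hpos x hx) h1 (by linarith : p - 1 < 0)
    nlinarith
  have hval : Υ w₀ = 0 := by
    rw [hΥg hw0, hgdef]
    simp only [haw₀, Real.one_rpow, one_mul]
    rw [hw0def, hKdef]
    field_simp
    ring
  have hder0 : HasDerivAt Υ 0 w₀ := by
    have h := hΥ' w₀ hw0
    rw [haw₀, Real.one_rpow] at h
    simpa using h
  have hsub : Ici w₀ ⊆ Ioi (-1 : ℝ) := fun x hx => lt_of_lt_of_le hw0 hx
  have hmono2 : StrictMonoOn Υ (Ici w₀) := by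
    apply strictMonoOn_of_deriv_pos (convex_Ici _) (hcont.mono hsub)
    rw [interior_Ici]
    intro x hx
    have hxw : w₀ < x := mem_Ioi.mp hx
    have hx' : (-1:ℝ) < x := lt_trans hw0 hxw
    rw [(hΥ' x hx').deriv]
    have h1 : 1 < a * (1 + x) := by rw [← haw₀]; nlinarith
    have h2 := Real.rpow_lt_one_of_one_lt_of_neg h1 (by linarith : p - 1 < 0)
    nlinarith
  refine ⟨hconv, hval, hder0, fun w hw => ?_⟩
  have := hmono2 self_mem_Ici (le_of_lt hw) hw
  linarith [hval ▸ this]
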